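/- For p ∈ (0, ∞), the global curvature energy of E_{π/2} is finite if and only if p ∈ (0, 1); that is, U_p(E_{π/2}) < ∞ ⟺ 0 < p < 1. -/

import Mathlib

open MeasureTheory Real
open scoped ENNReal NNReal Classical

/-- The Menger curvature of three points in `ℝⁿ`: the reciprocal of the circumradius,
`κ(x,y,z) = 2 dist(z, L_{x,y}) / (|x-z| |y-z|)` for pairwise distinct non-collinear points,
and `0` otherwise. -/
noncomputable def menger {n : ℕ} (x y z : EuclideanSpace ℝ (Fin n)) : ℝ :=
  if x ≠ y ∧ y ≠ z ∧ x ≠ z ∧ ¬ Collinear ℝ ({x, y, z} : Set (EuclideanSpace ℝ (Fin n)))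
  then 2 * Metric.infDist z (affineSpan ℝ ({x, y} : Set (EuclideanSpace ℝ (Fin n))) :
      Set (EuclideanSpace ℝ (Fin n))) / (dist x z * dist y z)
  else 0

/-- The point `(a, b) ∈ ℝ²` (with the Euclidean metric). -/
noncomputable def pt (a b : ℝ) : EuclideanSpace ℝ (Fin 2) :=
  (WithLp.equiv 2 (Fin 2 → ℝ)).symm ![a, b]

/-- The one-corner set `E_φ = ([0,1) × {0}) ∪ [0,1)·(cos φ, sin φ)`. -/
noncomputable def Eset (φ : ℝ) : Set (EuclideanSpace ℝ (Fin 2)) :=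
  {x | ∃ t ∈ Set.Ico (0:ℝ) 1, x = pt t 0} ∪
    {x | ∃ t ∈ Set.Ico (0:ℝ) 1, x = t • pt (Real.cos φ) (Real.sin φ)}

/-- Integral Menger curvature `M_p(X)` (innermost integration in `x`). -/
noncomputable def Mp (p : ℝ) (X : Set (EuclideanSpace ℝ (Fin 2))) : ℝ≥0∞ :=
  ∫⁻ z in X, ∫⁻ y in X, ∫⁻ x in X,
    (ENNReal.ofReal (menger x y z)) ^ p ∂μH[1] ∂μH[1] ∂μH[1]

/-- Intermediate energy `I_p(X)`. -/
noncomputable def Ip (p : ℝ) (X : Set (EuclideanSpace ℝ (Fin 2))) : ℝ≥0∞ :=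
  ∫⁻ y in X, ∫⁻ x in X,
    (⨆ z ∈ X, ENNReal.ofReal (menger x y z)) ^ p ∂μH[1] ∂μH[1]

/-- Global curvature energy `U_p(X)`. -/
noncomputable def Up (p : ℝ) (X : Set (EuclideanSpace ℝ (Fin 2))) : ℝ≥0∞ :=
  ∫⁻ x in X, (⨆ y ∈ X, ⨆ z ∈ X, ENNReal.ofReal (menger x y z)) ^ p ∂μH[1]

/-- `U_p(E_{π/2}) < ∞` if and only if `p ∈ (0,1)`. -/
lemma pt_apply_zero (a b : ℝ) : pt a b 0 = a := rfl
lemma pt_apply_one (a b : ℝ) : pt a b 1 = b := rfl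

lemma pt_eq_iff {a b c d : ℝ} : pt a b = pt c d ↔ a = c ∧ b = d :=
  ⟨fun h => ⟨congrArg (fun v => v 0) h, congrArg (fun v => v 1) h⟩, fun ⟨h1, h2⟩ => by rw [h1, h2]⟩

lemma dist_pt (a b c d : ℝ) : dist (pt a b) (pt c d) = √((a - c)^2 + (b - d)^2) := by
  rw [EuclideanSpace.dist_eq]
  congr 1
  simp [Fin.sum_univ_two, pt_apply_zero, pt_apply_one, Real.dist_eq, sq_abs]

lemma smul_pt (r a b : ℝ) : r • pt a b = pt (r*a) (r*b) := by
  ext i; fin_cases i <;> rfl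

lemma sub_pt (a b c d : ℝ) : pt a b - pt c d = pt (a-c) (b-d) := by
  ext i; fin_cases i <;> rfl

lemma add_pt (a b c d : ℝ) : pt a b + pt c d = pt (a+c) (b+d) := by
  ext i; fin_cases i <;> rfl

lemma collinear_horiz (a b c : ℝ) :
    Collinear ℝ ({pt a 0, pt b 0, pt c 0} : Set (EuclideanSpace ℝ (Fin 2))) := by
  rw [collinear_iff_of_mem (Set.mem_insert _ _)]
  refine ⟨pt 1 0, ?_⟩
  rintro p (rfl | rfl | rfl)
  · exact ⟨0, by ext i; fin_cases i <;> simp [pt_apply_zero, pt_apply_one]⟩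
  · exact ⟨b - a, by ext i; fin_cases i <;> simp [pt_apply_zero, pt_apply_one]⟩
  · exact ⟨c - a, by ext i; fin_cases i <;> simp [pt_apply_zero, pt_apply_one]⟩

lemma collinear_vert (a b c : ℝ) :
    Collinear ℝ ({pt 0 a, pt 0 b, pt 0 c} : Set (EuclideanSpace ℝ (Fin 2))) := by
  rw [collinear_iff_of_mem (Set.mem_insert _ _)]
  refine ⟨pt 0 1, ?_⟩
  rintro p (rfl | rfl | rfl)
  · exact ⟨0, by ext i; fin_cases i <;> simp [pt_apply_zero, pt_apply_one]⟩
  · exact ⟨b - a, by ext i; fin_cases i <;> simp [pt_apply_zero, pt_apply_one]⟩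
  · exact ⟨c - a, by ext i; fin_cases i <;> simp [pt_apply_zero, pt_apply_one]⟩

lemma menger_nonneg {n : ℕ} (x y z : EuclideanSpace ℝ (Fin n)) : 0 ≤ menger x y z := by
  rw [menger]
  split
  · have := Metric.infDist_nonneg (x := z)
      (s := (affineSpan ℝ ({x, y} : Set (EuclideanSpace ℝ (Fin n))) : Set (EuclideanSpace ℝ (Fin n))))
    positivity
  · exact le_refl 0

lemma menger_le_two_div_dist {n : ℕ} (x y z : EuclideanSpace ℝ (Fin n)) :
    menger x y z ≤ 2 / dist x z := by
  rw [menger]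
  split
  case isTrue h =>
    obtain ⟨hxy, hyz, hxz, -⟩ := h
    have hdxz : 0 < dist x z := dist_pos.mpr hxz
    have hdyz : 0 < dist y z := dist_pos.mpr hyz
    have hI : Metric.infDist z (affineSpan ℝ ({x, y} : Set (EuclideanSpace ℝ (Fin n))) :
        Set (EuclideanSpace ℝ (Fin n))) ≤ dist y z := by
      rw [dist_comm]
      exact Metric.infDist_le_dist_of_mem
        (by exact_mod_cast right_mem_affineSpan_pair ℝ x y)
    rw [div_le_div_iff₀ (by positivity) hdxz]
    have hInn := Metric.infDist_nonneg (x := z)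
      (s := (affineSpan ℝ ({x, y} : Set (EuclideanSpace ℝ (Fin n))) : Set (EuclideanSpace ℝ (Fin n))))
    nlinarith
  case isFalse => positivity

lemma menger_le_lineMap {n : ℕ} (x y z : EuclideanSpace ℝ (Fin n)) (r : ℝ) :
    menger x y z ≤ 2 * dist z (AffineMap.lineMap x y r) / (dist x z * dist y z) := by
  rw [menger]
  split
  case isTrue h =>
    obtain ⟨hxy, hyz, hxz, -⟩ := h
    have hdxz : 0 < dist x z := dist_pos.mpr hxz
    have hdyz : 0 < dist y z := dist_pos.mpr hyz
    rw [div_le_div_iff_of_pos_right (by positivity)]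
    have hI : Metric.infDist z (affineSpan ℝ ({x, y} : Set (EuclideanSpace ℝ (Fin n))) :
        Set (EuclideanSpace ℝ (Fin n))) ≤ dist z (AffineMap.lineMap x y r) :=
      Metric.infDist_le_dist_of_mem
        (by exact_mod_cast AffineMap.lineMap_mem_affineSpan_pair r x y)
    linarith
  case isFalse => positivity

lemma pt_zero_smul : ∀ t : ℝ, t • pt (Real.cos (π/2)) (Real.sin (π/2)) = pt 0 t := by
  intro t
  rw [Real.cos_pi_div_two, Real.sin_pi_div_two, smul_pt, mul_zero, mul_one]

lemma mem_Eset_iff {v : EuclideanSpace ℝ (Fin 2)} :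
    v ∈ Eset (π/2) ↔ (∃ s ∈ Set.Ico (0:ℝ) 1, v = pt s 0) ∨ ∃ s ∈ Set.Ico (0:ℝ) 1, v = pt 0 s := by
  unfold Eset
  simp only [Set.mem_union, Set.mem_setOf_eq, pt_zero_smul]

lemma mem_Eset_cases {v : EuclideanSpace ℝ (Fin 2)} (h : v ∈ Eset (π/2)) :
    (∃ s, 0 ≤ s ∧ s < 1 ∧ v = pt s 0) ∨ ∃ s, 0 < s ∧ s < 1 ∧ v = pt 0 s := by
  rcases mem_Eset_iff.mp h with ⟨s, ⟨h0, h1⟩, rfl⟩ | ⟨s, ⟨h0, h1⟩, rfl⟩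
  · exact Or.inl ⟨s, h0, h1, rfl⟩
  · rcases eq_or_lt_of_le h0 with rfl | h0'
    · exact Or.inl ⟨0, le_refl _, one_pos, rfl⟩
    · exact Or.inr ⟨s, h0', h1, rfl⟩

lemma mem_Eset_cases' {v : EuclideanSpace ℝ (Fin 2)} (h : v ∈ Eset (π/2)) :
    (∃ s, 0 ≤ s ∧ s < 1 ∧ v = pt 0 s) ∨ ∃ s, 0 < s ∧ s < 1 ∧ v = pt s 0 := by
  rcases mem_Eset_iff.mp h with ⟨s, ⟨h0, h1⟩, rfl⟩ | ⟨s, ⟨h0, h1⟩, rfl⟩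
  · rcases eq_or_lt_of_le h0 with rfl | h0'
    · exact Or.inl ⟨0, le_refl _, one_pos, rfl⟩
    · exact Or.inr ⟨s, h0', h1, rfl⟩
  · exact Or.inl ⟨s, h0, h1, rfl⟩

lemma sqrt_ge_right (a b : ℝ) (hb : 0 ≤ b) : b ≤ √(a^2 + b^2) := by
  calc b = √(b^2) := (Real.sqrt_sq hb).symm
    _ ≤ √(a^2 + b^2) := Real.sqrt_le_sqrt (by nlinarith)

lemma key_upper_h {t : ℝ} (ht : 0 < t) {y z : EuclideanSpace ℝ (Fin 2)}
    (hy : y ∈ Eset (π/2)) (hz : z ∈ Eset (π/2)) : menger (pt t 0) y z ≤ 2 / t := by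
  set x := pt t 0 with hx
  by_cases hcond : x ≠ y ∧ y ≠ z ∧ x ≠ z ∧
      ¬ Collinear ℝ ({x, y, z} : Set (EuclideanSpace ℝ (Fin 2)))
  case neg => rw [menger, if_neg hcond]; positivity
  obtain ⟨hxy, hyz, hxz, hncol⟩ := hcond
  rcases mem_Eset_cases hz with ⟨s, hs0, hs1, rfl⟩ | ⟨s, hs0, hs1, rfl⟩
  · -- z = pt s 0 horizontal
    rcases mem_Eset_cases' hy with ⟨u, hu0, hu1, rfl⟩ | ⟨u, hu0, hu1, rfl⟩
    · -- y = pt 0 u ; may have u = 0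
      rcases eq_or_lt_of_le hu0 with rfl | hu0'
      · exact absurd (by simpa using collinear_horiz t 0 s) hncol
      -- now 0 < u
      have hts : t ≠ s := fun h => hxz (by rw [hx, h])
      have hA : (0:ℝ) < |t - s| := abs_pos.mpr (sub_ne_zero.mpr hts)
      have key := menger_le_lineMap x (pt 0 u) (pt s 0) ((t - s)/t)
      have hw : AffineMap.lineMap x (pt 0 u) ((t-s)/t) = pt s ((t-s)*u/t) := by
        rw [AffineMap.lineMap_apply_module', hx, sub_pt, smul_pt, add_pt, pt_eq_iff]
        constructor
        · field_simp; ring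
        · ring
      have hdzw : dist (pt s 0) (AffineMap.lineMap x (pt 0 u) ((t-s)/t)) = |t-s| * u / t := by
        rw [hw, dist_pt]
        rw [show (s - s)^2 + (0 - (t-s)*u/t)^2 = ((t-s)*u/t)^2 by ring]
        rw [Real.sqrt_sq_eq_abs, abs_div, abs_mul, abs_of_pos hu0', abs_of_pos ht]
      have hdxz : dist x (pt s 0) = |t - s| := by
        rw [hx, dist_pt, show (t - s)^2 + ((0:ℝ) - 0)^2 = (t-s)^2 by ring, Real.sqrt_sq_eq_abs]
      have hdyz : dist (pt 0 u) (pt s 0) = √(s^2 + u^2) := by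
        rw [dist_pt]; congr 1; ring
      have hu_le : u ≤ √(s^2 + u^2) := sqrt_ge_right s u hu0'.le
      have hdyz_pos : (0:ℝ) < √(s^2 + u^2) := lt_of_lt_of_le hu0' hu_le
      refine key.trans ?_
      rw [hdzw, hdxz, hdyz, div_le_div_iff₀ (by positivity) ht]
      have : |t-s| * u / t * t = |t-s| * u := div_mul_cancel₀ _ (ne_of_gt ht)
      rw [mul_assoc, this]
      nlinarith [mul_le_mul_of_nonneg_left hu_le (abs_nonneg (t-s))]
    · -- y = pt u 0 : collinear, contradiction
      exact absurd (collinear_horiz t u s) hncol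
  · -- z = pt 0 s, 0 < s
    refine (menger_le_two_div_dist x y (pt 0 s)).trans ?_
    have hd : dist x (pt 0 s) = √(t^2 + s^2) := by
      rw [hx, dist_pt]; congr 1; ring
    have hge : t ≤ dist x (pt 0 s) := by
      rw [hd]
      rw [show t^2 + s^2 = s^2 + t^2 by ring]
      exact sqrt_ge_right s t ht.le
    have hdpos : (0:ℝ) < dist x (pt 0 s) := lt_of_lt_of_le ht hge
    rw [div_le_div_iff₀ hdpos ht]
    nlinarith

lemma key_upper_v {t : ℝ} (ht : 0 < t) {y z : EuclideanSpace ℝ (Fin 2)}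
    (hy : y ∈ Eset (π/2)) (hz : z ∈ Eset (π/2)) : menger (pt 0 t) y z ≤ 2 / t := by
  set x := pt 0 t with hx
  by_cases hcond : x ≠ y ∧ y ≠ z ∧ x ≠ z ∧
      ¬ Collinear ℝ ({x, y, z} : Set (EuclideanSpace ℝ (Fin 2)))
  case neg => rw [menger, if_neg hcond]; positivity
  obtain ⟨hxy, hyz, hxz, hncol⟩ := hcond
  rcases mem_Eset_cases' hz with ⟨s, hs0, hs1, rfl⟩ | ⟨s, hs0, hs1, rfl⟩
  · -- z = pt 0 s vertical
    rcases mem_Eset_cases hy with ⟨u, hu0, hu1, rfl⟩ | ⟨u, hu0, hu1, rfl⟩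
    · -- y = pt u 0 ; may have u = 0
      rcases eq_or_lt_of_le hu0 with rfl | hu0'
      · exact absurd (by simpa using collinear_vert t 0 s) hncol
      have hts : t ≠ s := fun h => hxz (by rw [hx, h])
      have hA : (0:ℝ) < |t - s| := abs_pos.mpr (sub_ne_zero.mpr hts)
      have key := menger_le_lineMap x (pt u 0) (pt 0 s) ((t - s)/t)
      have hw : AffineMap.lineMap x (pt u 0) ((t-s)/t) = pt ((t-s)*u/t) s := by
        rw [AffineMap.lineMap_apply_module', hx, sub_pt, smul_pt, add_pt, pt_eq_iff]
        constructor
        · ring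
        · field_simp; ring
      have hdzw : dist (pt 0 s) (AffineMap.lineMap x (pt u 0) ((t-s)/t)) = |t-s| * u / t := by
        rw [hw, dist_pt]
        rw [show ((0:ℝ) - (t-s)*u/t)^2 + (s - s)^2 = ((t-s)*u/t)^2 by ring]
        rw [Real.sqrt_sq_eq_abs, abs_div, abs_mul, abs_of_pos hu0', abs_of_pos ht]
      have hdxz : dist x (pt 0 s) = |t - s| := by
        rw [hx, dist_pt, show ((0:ℝ) - 0)^2 + (t - s)^2 = (t-s)^2 by ring, Real.sqrt_sq_eq_abs]
      have hdyz : dist (pt u 0) (pt 0 s) = √(s^2 + u^2) := by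
        rw [dist_pt]; congr 1; ring
      have hu_le : u ≤ √(s^2 + u^2) := sqrt_ge_right s u hu0'.le
      have hdyz_pos : (0:ℝ) < √(s^2 + u^2) := lt_of_lt_of_le hu0' hu_le
      refine key.trans ?_
      rw [hdzw, hdxz, hdyz, div_le_div_iff₀ (by positivity) ht]
      have : |t-s| * u / t * t = |t-s| * u := div_mul_cancel₀ _ (ne_of_gt ht)
      rw [mul_assoc, this]
      nlinarith [mul_le_mul_of_nonneg_left hu_le (abs_nonneg (t-s))]
    · -- y = pt 0 u : collinear, contradiction
      exact absurd (collinear_vert t u s) hncol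
  · -- z = pt s 0, 0 < s
    refine (menger_le_two_div_dist x y (pt s 0)).trans ?_
    have hd : dist x (pt s 0) = √(s^2 + t^2) := by
      rw [hx, dist_pt]; congr 1; ring
    have hge : t ≤ dist x (pt s 0) := by
      rw [hd]
      exact sqrt_ge_right s t ht.le
    have hdpos : (0:ℝ) < dist x (pt s 0) := lt_of_lt_of_le ht hge
    rw [div_le_div_iff₀ hdpos ht]
    nlinarith

lemma vec_eq_pt (v : EuclideanSpace ℝ (Fin 2)) : v = pt (v 0) (v 1) := by
  ext i; fin_cases i <;> rfl

lemma key_lower {t : ℝ} (ht : 0 < t) :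
    1 / t ≤ menger (pt t 0) (pt 0 0) (pt 0 t) := by
  have htne : t ≠ 0 := ne_of_gt ht
  have hxy : pt t 0 ≠ pt 0 0 := fun h => htne (pt_eq_iff.mp h).1
  have hyz : pt 0 0 ≠ pt 0 t := fun h => htne ((pt_eq_iff.mp h).2).symm
  have hxz : pt t 0 ≠ pt 0 t := fun h => htne (pt_eq_iff.mp h).1
  have hncol : ¬ Collinear ℝ ({pt t 0, pt 0 0, pt 0 t} : Set (EuclideanSpace ℝ (Fin 2))) := by
    intro hcol
    rw [collinear_iff_of_mem (show pt 0 0 ∈ _ from Set.mem_insert_of_mem _ (Set.mem_insert _ _))]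
      at hcol
    obtain ⟨v, hv⟩ := hcol
    obtain ⟨r, hr⟩ := hv (pt t 0) (Set.mem_insert _ _)
    obtain ⟨r', hr'⟩ := hv (pt 0 t)
      (Set.mem_insert_of_mem _ (Set.mem_insert_of_mem _ (Set.mem_singleton _)))
    rw [vec_eq_pt v, smul_pt, vadd_eq_add, add_pt, pt_eq_iff] at hr hr'
    obtain ⟨h1, h2⟩ := hr
    obtain ⟨h3, h4⟩ := hr'
    have e1 : t = r * v 0 := by linarith [h1]
    have e2 : r * v 1 = 0 := by linarith [h2]
    have e3 : r' * v 0 = 0 := by linarith [h3]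
    have e4 : t = r' * v 1 := by linarith [h4]
    nlinarith [mul_pos ht ht]
  have hcond : pt t 0 ≠ pt 0 0 ∧ pt 0 0 ≠ pt 0 t ∧ pt t 0 ≠ pt 0 t ∧
      ¬ Collinear ℝ ({pt t 0, pt 0 0, pt 0 t} : Set (EuclideanSpace ℝ (Fin 2))) :=
    ⟨hxy, hyz, hxz, hncol⟩
  rw [menger, if_pos hcond]
  set S : Set (EuclideanSpace ℝ (Fin 2)) :=
    (affineSpan ℝ ({pt t 0, pt 0 0} : Set (EuclideanSpace ℝ (Fin 2))) :
      Set (EuclideanSpace ℝ (Fin 2))) with hS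
  have hne : S.Nonempty := ⟨pt t 0, by exact_mod_cast left_mem_affineSpan_pair ℝ _ _⟩
  have hinf : t ≤ Metric.infDist (pt 0 t) S := by
    by_contra hlt
    push_neg at hlt
    rw [Metric.infDist_lt_iff hne] at hlt
    obtain ⟨w, hwS, hdlt⟩ := hlt
    have hmem : w ∈ affineSpan ℝ ({pt t 0, pt 0 0} : Set (EuclideanSpace ℝ (Fin 2))) := hwS
    have hdir := AffineSubspace.vsub_mem_direction hmem
      (left_mem_affineSpan_pair ℝ (pt t 0) (pt 0 0))
    rw [direction_affineSpan, mem_vectorSpan_pair] at hdir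
    obtain ⟨r, hr⟩ := hdir
    have hw : w = pt (r * t + t) 0 := by
      have : w = r • (pt t 0 -ᵥ pt 0 0) +ᵥ pt t 0 := by
        rw [hr, vsub_vadd]
      rw [this, vsub_eq_sub, sub_pt, smul_pt, vadd_eq_add, add_pt, pt_eq_iff]
      constructor <;> ring
    rw [hw, dist_pt] at hdlt
    have : t ≤ √((0 - (r * t + t))^2 + (t - 0)^2) := by
      rw [show (0 - (r * t + t))^2 + (t - 0)^2 = (r*t+t)^2 + t^2 by ring]
      exact sqrt_ge_right _ _ ht.le
    linarith
  have hdxz : dist (pt t 0) (pt 0 t) = √(t^2 + t^2) := by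
    rw [dist_pt]; congr 1; ring
  have hdyz : dist (pt 0 0) (pt 0 t) = t := by
    rw [dist_pt, show ((0:ℝ)-0)^2 + (0-t)^2 = t^2 by ring, Real.sqrt_sq ht.le]
  have hdxz_le : dist (pt t 0) (pt 0 t) ≤ 2 * t := by
    rw [hdxz, show t^2 + t^2 = (2*t)^2 - 2*t^2 by ring]
    calc √((2*t)^2 - 2*t^2) ≤ √((2*t)^2) := Real.sqrt_le_sqrt (by nlinarith)
      _ = 2*t := Real.sqrt_sq (by linarith)
  have hdxz_pos : 0 < dist (pt t 0) (pt 0 t) := dist_pos.mpr hxz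
  rw [hdyz, div_le_div_iff₀ ht (by positivity)]
  nlinarith [mul_le_mul_of_nonneg_right hdxz_le ht.le, mul_le_mul_of_nonneg_right hinf ht.le]


lemma isometry_e1 : Isometry (fun t : ℝ => pt t 0) := by
  apply Isometry.of_dist_eq
  intro a b
  rw [dist_pt, show (a-b)^2 + ((0:ℝ)-0)^2 = (a-b)^2 by ring, Real.sqrt_sq_eq_abs, Real.dist_eq]

lemma isometry_e2 : Isometry (fun t : ℝ => pt 0 t) := by
  apply Isometry.of_dist_eq
  intro a b
  rw [dist_pt, show ((0:ℝ)-0)^2 + (a-b)^2 = (a-b)^2 by ring, Real.sqrt_sq_eq_abs, Real.dist_eq]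

lemma lintegral_image_isometry {f : ℝ → EuclideanSpace ℝ (Fin 2)} (hf : Isometry f)
    {s : Set ℝ} (hs : MeasurableSet s) (g : EuclideanSpace ℝ (Fin 2) → ℝ≥0∞) :
    ∫⁻ x in f '' s, g x ∂μH[1] = ∫⁻ t in s, g (f t) ∂volume := by
  have hemb : MeasurableEmbedding f := hf.isClosedEmbedding.measurableEmbedding
  have hrestrict : (μH[1] : Measure (EuclideanSpace ℝ (Fin 2))).restrict (f '' s)
      = Measure.map f (volume.restrict s) := by
    ext u hu
    rw [Measure.restrict_apply hu, Measure.map_apply hemb.measurable hu,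
      Measure.restrict_apply (hemb.measurable hu), Set.inter_comm u, Set.inter_comm (f ⁻¹' u),
      ← Set.image_inter_preimage,
      hf.hausdorffMeasure_image (Or.inl one_pos.le), ← MeasureTheory.hausdorffMeasure_real]
  rw [hrestrict, hemb.lintegral_map]

lemma Eset_eq : Eset (π/2) =
    ((fun t : ℝ => pt t 0) '' Set.Ico 0 1) ∪ ((fun t : ℝ => pt 0 t) '' Set.Ico 0 1) := by
  ext v
  rw [mem_Eset_iff]
  constructor
  · rintro (⟨s, hs, rfl⟩ | ⟨s, hs, rfl⟩)
    · exact Or.inl ⟨s, hs, rfl⟩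
    · exact Or.inr ⟨s, hs, rfl⟩
  · rintro (⟨s, hs, rfl⟩ | ⟨s, hs, rfl⟩)
    · exact Or.inl ⟨s, hs, rfl⟩
    · exact Or.inr ⟨s, hs, rfl⟩

lemma fin_int {p : ℝ} (hp : 0 < p) (hp1 : p < 1) :
    ∫⁻ t in Set.Ioo (0:ℝ) 1, ENNReal.ofReal ((2/t)^p) < ⊤ := by
  have h1 : IntegrableOn (fun t : ℝ => t ^ (-p)) (Set.Ioo (0:ℝ) 1) :=
    (intervalIntegral.integrableOn_Ioo_rpow_iff one_pos).mpr (by linarith)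
  have h2 := h1.const_mul ((2:ℝ)^p)
  have hint : IntegrableOn (fun t : ℝ => (2/t)^p) (Set.Ioo (0:ℝ) 1) := by
    apply MeasureTheory.IntegrableOn.congr_fun h2 ?_ measurableSet_Ioo
    intro t ht
    show (2:ℝ)^p * t ^ (-p) = (2/t)^p
    rw [Real.div_rpow (by norm_num) ht.1.le, Real.rpow_neg ht.1.le, div_eq_mul_inv]
  exact hint.lintegral_lt_top

lemma div_int : ∫⁻ t in Set.Ioo (0:ℝ) 1, ENNReal.ofReal (1/t) = ⊤ := by
  by_contra h
  have hlt : ∫⁻ t in Set.Ioo (0:ℝ) 1, ENNReal.ofReal (1/t) < ⊤ := lt_top_iff_ne_top.mpr h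
  have hmeas : AEStronglyMeasurable (fun t : ℝ => 1/t)
      (volume.restrict (Set.Ioo (0:ℝ) 1)) :=
    (measurable_const.div measurable_id).aestronglyMeasurable
  have hnn : 0 ≤ᵐ[volume.restrict (Set.Ioo (0:ℝ) 1)] fun t => 1/t :=
    (ae_restrict_iff' measurableSet_Ioo).mpr (ae_of_all _ (fun t ht => by
      have := ht.1; positivity))
  have hint : IntegrableOn (fun t : ℝ => 1/t) (Set.Ioo (0:ℝ) 1) :=
    ⟨hmeas, (hasFiniteIntegral_iff_ofReal hnn).mpr hlt⟩
  have hint' : IntegrableOn (fun t : ℝ => t ^ (-1:ℝ)) (Set.Ioo (0:ℝ) 1) := by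
    apply MeasureTheory.IntegrableOn.congr_fun hint ?_ measurableSet_Ioo
    intro t ht
    show 1/t = t ^ (-1:ℝ)
    rw [Real.rpow_neg_one, one_div]
  have := (intervalIntegral.integrableOn_Ioo_rpow_iff one_pos).mp hint'
  linarith


/-- `U_p(E_{π/2})` is finite if and only if `p ∈ (0,1)`. -/
theorem Up_Eset_pi_div_two_lt_top_iff (p : ℝ) (hp : 0 < p) :
    Up p (Eset (π / 2)) < ⊤ ↔ p ∈ Set.Ioo (0:ℝ) 1 := by
  constructor
  · intro hfin
    refine ⟨hp, ?_⟩
    by_contra hge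
    push_neg at hge
    -- show the integral over the horizontal arm is infinite
    have hsub : (fun t : ℝ => pt t 0) '' Set.Ioo 0 1 ⊆ Eset (π/2) := by
      rintro v ⟨t, ht, rfl⟩
      exact mem_Eset_iff.mpr (Or.inl ⟨t, ⟨ht.1.le, ht.2⟩, rfl⟩)
    have hmono : (∫⁻ x in (fun t : ℝ => pt t 0) '' Set.Ioo 0 1,
        (⨆ y ∈ Eset (π/2), ⨆ z ∈ Eset (π/2), ENNReal.ofReal (menger x y z)) ^ p ∂μH[1])
        ≤ Up p (Eset (π/2)) :=
      lintegral_mono' (Measure.restrict_mono hsub le_rfl) le_rfl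
    rw [lintegral_image_isometry isometry_e1 measurableSet_Ioo] at hmono
    have hbound : ∀ t ∈ Set.Ioo (0:ℝ) 1, ENNReal.ofReal (1/t) ≤
        (⨆ y ∈ Eset (π/2), ⨆ z ∈ Eset (π/2), ENNReal.ofReal (menger (pt t 0) y z)) ^ p := by
      intro t ht
      have hy0 : pt 0 0 ∈ Eset (π/2) := mem_Eset_iff.mpr (Or.inl ⟨0, ⟨le_refl 0, one_pos⟩, rfl⟩)
      have hz0 : pt 0 t ∈ Eset (π/2) := mem_Eset_iff.mpr (Or.inr ⟨t, ⟨ht.1.le, ht.2⟩, rfl⟩)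
      have h1 : ENNReal.ofReal (1/t) ≤
          ⨆ y ∈ Eset (π/2), ⨆ z ∈ Eset (π/2), ENNReal.ofReal (menger (pt t 0) y z) :=
        calc ENNReal.ofReal (1/t)
            ≤ ENNReal.ofReal (menger (pt t 0) (pt 0 0) (pt 0 t)) :=
              ENNReal.ofReal_le_ofReal (key_lower ht.1)
          _ ≤ ⨆ z ∈ Eset (π/2), ENNReal.ofReal (menger (pt t 0) (pt 0 0) z) :=
              le_iSup₂ (f := fun z (_ : z ∈ Eset (π/2)) =>
                ENNReal.ofReal (menger (pt t 0) (pt 0 0) z)) (pt 0 t) hz0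
          _ ≤ ⨆ y ∈ Eset (π/2), ⨆ z ∈ Eset (π/2), ENNReal.ofReal (menger (pt t 0) y z) :=
              le_iSup₂ (f := fun y (_ : y ∈ Eset (π/2)) =>
                ⨆ z ∈ Eset (π/2), ENNReal.ofReal (menger (pt t 0) y z)) (pt 0 0) hy0
      have hone : 1 ≤ ENNReal.ofReal (1/t) := by
        rw [ENNReal.one_le_ofReal]
        rw [le_div_iff₀ ht.1]
        linarith [ht.2]
      calc ENNReal.ofReal (1/t) = ENNReal.ofReal (1/t) ^ (1:ℝ) := (ENNReal.rpow_one _).symm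
        _ ≤ ENNReal.ofReal (1/t) ^ p := ENNReal.rpow_le_rpow_of_exponent_le hone hge
        _ ≤ _ := ENNReal.rpow_le_rpow h1 hp.le
    have htop : (⊤:ℝ≥0∞) ≤ ∫⁻ t in Set.Ioo (0:ℝ) 1,
        (⨆ y ∈ Eset (π/2), ⨆ z ∈ Eset (π/2), ENNReal.ofReal (menger (pt t 0) y z)) ^ p ∂volume := by
      rw [← div_int]
      exact setLIntegral_mono_ae' measurableSet_Ioo (ae_of_all _ hbound)
    exact absurd (lt_of_le_of_lt (le_trans htop hmono) hfin) (lt_irrefl ⊤)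
  · rintro ⟨-, hp1⟩
    have harm : ∀ f : ℝ → EuclideanSpace ℝ (Fin 2), Isometry f →
        (∀ t, t ∈ Set.Ioo (0:ℝ) 1 → ∀ y ∈ Eset (π/2), ∀ z ∈ Eset (π/2),
          menger (f t) y z ≤ 2/t) →
        (∫⁻ x in f '' Set.Ico 0 1,
          (⨆ y ∈ Eset (π/2), ⨆ z ∈ Eset (π/2), ENNReal.ofReal (menger x y z)) ^ p ∂μH[1]) < ⊤ := by
      intro f hf hbd
      rw [lintegral_image_isometry hf measurableSet_Ico,
        ← Measure.restrict_congr_set MeasureTheory.Ioo_ae_eq_Ico]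
      refine lt_of_le_of_lt ?_ (fin_int hp hp1)
      refine setLIntegral_mono_ae' measurableSet_Ioo (ae_of_all _ ?_)
      intro t ht
      have hsup : (⨆ y ∈ Eset (π/2), ⨆ z ∈ Eset (π/2), ENNReal.ofReal (menger (f t) y z))
          ≤ ENNReal.ofReal (2/t) :=
        iSup₂_le fun y hy => iSup₂_le fun z hz =>
          ENNReal.ofReal_le_ofReal (hbd t ht y hy z hz)
      calc (⨆ y ∈ Eset (π/2), ⨆ z ∈ Eset (π/2), ENNReal.ofReal (menger (f t) y z)) ^ p
          ≤ (ENNReal.ofReal (2/t)) ^ p := ENNReal.rpow_le_rpow hsup hp.le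
        _ = ENNReal.ofReal ((2/t)^p) := ENNReal.ofReal_rpow_of_pos (by have := ht.1; positivity)
    have h1 := harm (fun t => pt t 0) isometry_e1
      (fun t ht y hy z hz => key_upper_h ht.1 hy hz)
    have h2 := harm (fun t => pt 0 t) isometry_e2
      (fun t ht y hy z hz => key_upper_v ht.1 hy hz)
    have hsplit : Up p (Eset (π/2)) ≤
        (∫⁻ x in (fun t : ℝ => pt t 0) '' Set.Ico 0 1,
          (⨆ y ∈ Eset (π/2), ⨆ z ∈ Eset (π/2), ENNReal.ofReal (menger x y z)) ^ p ∂μH[1]) +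
        ∫⁻ x in (fun t : ℝ => pt 0 t) '' Set.Ico 0 1,
          (⨆ y ∈ Eset (π/2), ⨆ z ∈ Eset (π/2), ENNReal.ofReal (menger x y z)) ^ p ∂μH[1] := by
      rw [Up, Eset_eq]
      exact lintegral_union_le _ _ _
    exact lt_of_le_of_lt hsplit (ENNReal.add_lt_top.mpr ⟨h1, h2⟩)
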